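/- Let X be a random variable with values in [0,1]^d admitting a density with respect to the Lebesgue measure on [0,1]^d, let Z be a real-valued square-integrable random variable, and let ((X_m, Z_m))_{m ≥ 1} be a sequence of independent random variables each distributed as (X, Z). For a ∈ [0,1]^d write B_a = Π_{j=1}^d [0, a(j)). Define ν_M(α, β, a) = (1/M) Σ_{m=1}^M (Z_m − α·1{X_m ∈ B_a} − β·1{X_m ∉ B_a})² and ν(α, β, a) = E[(Z − α·1{X ∈ B_a} − β·1{X ∉ B_a})²]. Then, almost surely, for every C > 0, sup_{a ∈ [0,1]^d, |α| ≤ C, |β| ≤ C} |ν_M(α, β, a) − ν(α, β, a)| → 0 as M → ∞. -/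

import Mathlib

open MeasureTheory ProbabilityTheory Filter Topology

set_option linter.unusedSectionVars false
set_option linter.unusedVariables false
set_option linter.unnecessarySimpa false
set_option maxHeartbeats 1000000


/-- The squared loss `(z − α·1{x ∈ B_a} − β·1{x ∉ B_a})²`, where
`B_a = Π_j [0, a(j))`, as a function of the data `(x, z)` and parameters `(α, β, a)`. -/
noncomputable def treeLoss {d : ℕ} (x : Fin d → ℝ) (z : ℝ) (p : ℝ × ℝ × (Fin d → ℝ)) : ℝ :=
  (z - p.1 * (Set.univ.pi fun j => Set.Ico (0 : ℝ) (p.2.2 j)).indicator (fun _ => (1 : ℝ)) x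
     - p.2.1 * ((Set.univ.pi fun j => Set.Ico (0 : ℝ) (p.2.2 j))ᶜ.indicator
        (fun _ => (1 : ℝ)) x)) ^ 2



noncomputable def boxFn {d : ℕ} (ξ : (Fin d → ℝ) × ℝ → ℝ) (a : Fin d → ℝ)
    (y : (Fin d → ℝ) × ℝ) : ℝ :=
  ξ y * (Set.univ.pi fun j => Set.Ico (0:ℝ) (a j)).indicator (fun _ => (1:ℝ)) y.1

noncomputable def xiP {d : ℕ} (y : (Fin d → ℝ) × ℝ) : ℝ := max y.2 0
noncomputable def xiM {d : ℕ} (y : (Fin d → ℝ) × ℝ) : ℝ := max (-y.2) 0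
def xiOne {d : ℕ} (_ : (Fin d → ℝ) × ℝ) : ℝ := 1

lemma key_ident {γ : Type*} (S : Set γ) (x : γ) (z α β : ℝ) :
    (z - α * S.indicator (fun _ => (1:ℝ)) x - β * Sᶜ.indicator (fun _ => (1:ℝ)) x)^2
      = z^2 - 2*β*z + β^2 - 2*(α-β)*(z * S.indicator (fun _ => (1:ℝ)) x)
        + (α^2-β^2) * S.indicator (fun _ => (1:ℝ)) x := by
  by_cases h : x ∈ S
  · simp only [Set.indicator_of_mem h, Set.indicator_of_notMem (by simpa using h : x ∉ Sᶜ)]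
    ring
  · simp only [Set.indicator_of_notMem h, Set.indicator_of_mem (by simpa using h : x ∈ Sᶜ)]
    ring

lemma treeLoss_expand {d : ℕ} (α β : ℝ) (a : Fin d → ℝ) (y : (Fin d → ℝ) × ℝ) :
    treeLoss y.1 y.2 (α, β, a)
      = y.2^2 - 2*β*y.2 + β^2
        - 2*(α-β)*(boxFn (xiP (d := d)) a y - boxFn (xiM (d := d)) a y)
        + (α^2-β^2)*(boxFn (xiOne (d := d)) a y) := by
  have hzu : boxFn (xiP (d := d)) a y - boxFn (xiM (d := d)) a y
      = y.2 * (Set.univ.pi fun j => Set.Ico (0:ℝ) (a j)).indicator (fun _ => (1:ℝ)) y.1 := by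
    simp only [boxFn, xiP, xiM]
    rw [← sub_mul, max_zero_sub_max_neg_zero_eq_self]
  have hone : boxFn (xiOne (d := d)) a y
      = (Set.univ.pi fun j => Set.Ico (0:ℝ) (a j)).indicator (fun _ => (1:ℝ)) y.1 := one_mul _
  rw [hzu, hone, treeLoss]
  exact key_ident _ _ _ _ _

lemma emp_expand {d : ℕ} (α β : ℝ) (a : Fin d → ℝ) (M : ℕ) (hM : 1 ≤ M)
    (y : ℕ → (Fin d → ℝ) × ℝ) :
    (M:ℝ)⁻¹ * ∑ m ∈ Finset.range M, treeLoss (y m).1 (y m).2 (α, β, a)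
      = (M:ℝ)⁻¹ * (∑ m ∈ Finset.range M, (y m).2^2)
        - 2*β*((M:ℝ)⁻¹ * ∑ m ∈ Finset.range M, (y m).2) + β^2
        - 2*(α-β)*((M:ℝ)⁻¹ * ∑ m ∈ Finset.range M, boxFn (xiP (d := d)) a (y m)
            - (M:ℝ)⁻¹ * ∑ m ∈ Finset.range M, boxFn (xiM (d := d)) a (y m))
        + (α^2-β^2)*((M:ℝ)⁻¹ * ∑ m ∈ Finset.range M, boxFn (xiOne (d := d)) a (y m)) := by
  have hMne : (M:ℝ) ≠ 0 := Nat.cast_ne_zero.2 (by omega)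
  rw [Finset.sum_congr rfl (fun m _ => treeLoss_expand α β a (y m))]
  simp only [Finset.sum_add_distrib, Finset.sum_sub_distrib, ← Finset.mul_sum,
    Finset.sum_const, Finset.card_range, nsmul_eq_mul]
  field_simp

-- pointwise indicator bracketing
lemma ind_bracket {d : ℕ} (a b : Fin d → ℝ) (hab : a ≤ b) (x : Fin d → ℝ) :
    (Set.univ.pi fun j => Set.Ico (0:ℝ) (b j)).indicator (fun _ => (1:ℝ)) x
      - (Set.univ.pi fun j => Set.Ico (0:ℝ) (a j)).indicator (fun _ => (1:ℝ)) x
    ≤ ∑ j : Fin d, ((Set.Iio (b j)).indicator (fun _ => (1:ℝ)) (x j)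
        - (Set.Iio (a j)).indicator (fun _ => (1:ℝ)) (x j)) := by
  have hterm : ∀ j : Fin d, 0 ≤ (Set.Iio (b j)).indicator (fun _ => (1:ℝ)) (x j)
      - (Set.Iio (a j)).indicator (fun _ => (1:ℝ)) (x j) := by
    intro j
    by_cases h : x j < a j
    · simp [Set.indicator_of_mem, h, lt_of_lt_of_le h (hab j)]
    · simp only [Set.indicator_of_notMem (by simpa using h : x j ∉ Set.Iio (a j))]
      by_cases h' : x j < b j <;> simp [h']
  by_cases hb : x ∈ Set.univ.pi fun j => Set.Ico (0:ℝ) (b j)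
  · by_cases ha : x ∈ Set.univ.pi fun j => Set.Ico (0:ℝ) (a j)
    · simp only [Set.indicator_of_mem hb, Set.indicator_of_mem ha, sub_self]
      exact Finset.sum_nonneg (fun j _ => hterm j)
    · simp only [Set.indicator_of_mem hb, Set.indicator_of_notMem ha]
      obtain ⟨j₀, hj₀⟩ : ∃ j, ¬ (x j ∈ Set.Ico (0:ℝ) (a j)) := by
        by_contra h; push_neg at h; exact ha (fun j _ => h j)
      have hx0 : (0:ℝ) ≤ x j₀ ∧ x j₀ < b j₀ := hb j₀ (Set.mem_univ _)
      have hxa : ¬ x j₀ < a j₀ := fun h => hj₀ ⟨hx0.1, h⟩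
      have hj0val : (Set.Iio (b j₀)).indicator (fun _ => (1:ℝ)) (x j₀)
          - (Set.Iio (a j₀)).indicator (fun _ => (1:ℝ)) (x j₀) = 1 := by
        simp [Set.indicator_of_mem, hx0.2, Set.indicator_of_notMem, hxa]
      have hsum := Finset.single_le_sum (fun j _ => hterm j) (Finset.mem_univ j₀)
      rw [hj0val] at hsum
      linarith
  · have ha : x ∉ Set.univ.pi fun j => Set.Ico (0:ℝ) (a j) := by
      intro ha; exact hb (fun j hj => ⟨(ha j hj).1, lt_of_lt_of_le (ha j hj).2 (hab j)⟩)
    simp only [Set.indicator_of_notMem hb, Set.indicator_of_notMem ha, sub_self]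
    exact Finset.sum_nonneg (fun j _ => hterm j)


lemma slln_aux {Ω : Type*} [MeasurableSpace Ω] (μ : Measure Ω) [IsProbabilityMeasure μ]
    {d : ℕ} (X : Ω → (Fin d → ℝ)) (hX : Measurable X)
    (Z : Ω → ℝ) (hZae : AEMeasurable Z μ)
    (W : ℕ → Ω → (Fin d → ℝ) × ℝ) (hWmeas : ∀ m, Measurable (W m))
    (hWindep : iIndepFun W μ)
    (hWident : ∀ m, Measure.map (W m) μ = Measure.map (fun ω => (X ω, Z ω)) μ)
    (f : (Fin d → ℝ) × ℝ → ℝ) (hf : Measurable f)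
    (hfi : Integrable (fun ω => f (X ω, Z ω)) μ) :
    ∀ᵐ ω ∂μ, Tendsto (fun M : ℕ => (M:ℝ)⁻¹ * ∑ m ∈ Finset.range M, f (W m ω))
      atTop (𝓝 (∫ ω', f (X ω', Z ω') ∂μ)) := by
  have hXZ : AEMeasurable (fun ω => (X ω, Z ω)) μ := hX.aemeasurable.prodMk hZae
  have hmap : ∀ m, Measure.map (fun ω => f (W m ω)) μ
      = Measure.map f (Measure.map (fun ω => (X ω, Z ω)) μ) := by
    intro m
    rw [← hWident m]
    exact (Measure.map_map hf (hWmeas m)).symm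
  have hident : ∀ m, IdentDistrib (fun ω => f (W m ω)) (fun ω => f (W 0 ω)) μ μ := by
    intro m
    exact ⟨(hf.comp (hWmeas m)).aemeasurable, (hf.comp (hWmeas 0)).aemeasurable,
      by rw [hmap m, hmap 0]⟩
  have hint0 : Integrable (fun ω => f (W 0 ω)) μ := by
    have h1 : Integrable f (Measure.map (fun ω => (X ω, Z ω)) μ) := by
      rw [integrable_map_measure hf.aestronglyMeasurable hXZ]
      exact hfi
    rw [← hWident 0, integrable_map_measure hf.aestronglyMeasurable (hWmeas 0).aemeasurable] at h1
    exact h1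
  have hindep : Pairwise (Function.onFun (IndepFun · · μ) fun m ω => f (W m ω)) := by
    intro i j hij
    exact (hWindep.indepFun hij).comp hf hf
  have hexp : ∫ ω, f (W 0 ω) ∂μ = ∫ ω', f (X ω', Z ω') ∂μ := by
    rw [← integral_map (hWmeas 0).aemeasurable hf.aestronglyMeasurable, hWident 0,
      integral_map hXZ hf.aestronglyMeasurable]
  have h := strong_law_ae (μ := μ) (fun m ω => f (W m ω)) hint0 hindep hident
  filter_upwards [h] with ω hω
  rw [hexp] at hω
  simpa [smul_eq_mul] using hω

lemma hyperplane_null {Ω : Type*} [MeasurableSpace Ω] (μ : Measure Ω)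
    {d : ℕ} (X : Ω → (Fin d → ℝ)) (hX : Measurable X)
    (hdens : Measure.map X μ ≪ (volume : Measure (Fin d → ℝ)))
    (j : Fin d) (t : ℝ) : μ {ω | X ω j = t} = 0 := by
  have hset : MeasurableSet {x : Fin d → ℝ | x j = t} :=
    measurableSet_eq_fun (measurable_pi_apply j) measurable_const
  have hvol : (volume : Measure (Fin d → ℝ)) {x | x j = t} = 0 := by
    have hsub : {x : Fin d → ℝ | x j = t} ⊆ Set.univ.pi
        (fun i => if i = j then ({t} : Set ℝ) else Set.univ) := by
      intro x hx i _
      by_cases hij : i = j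
      · subst hij; simpa using hx
      · simp [hij]
    refine measure_mono_null hsub ?_
    rw [volume_pi_pi]
    refine Finset.prod_eq_zero (Finset.mem_univ j) ?_
    simp
  have heq : {ω | X ω j = t} = X ⁻¹' {x | x j = t} := rfl
  rw [heq, ← Measure.map_apply hX hset]
  exact hdens hvol


lemma ind_cont (c x t : ℝ) (h : x ≠ t) :
    ContinuousAt (fun u : ℝ => c * (Set.Iio u).indicator (fun _ => (1:ℝ)) x) t := by
  rcases lt_or_gt_of_ne h with hlt | hgt
  · have heq : (fun u : ℝ => c * (Set.Iio u).indicator (fun _ => (1:ℝ)) x)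
        =ᶠ[𝓝 t] (fun _ => c) := by
      filter_upwards [Ioi_mem_nhds hlt] with u hu
      rw [Set.indicator_of_mem (by exact hu : x ∈ Set.Iio u)]
      simp
    rw [continuousAt_congr heq]
    exact continuousAt_const
  · have heq : (fun u : ℝ => c * (Set.Iio u).indicator (fun _ => (1:ℝ)) x)
        =ᶠ[𝓝 t] (fun _ => (0:ℝ)) := by
      filter_upwards [Iio_mem_nhds hgt] with u hu
      rw [Set.indicator_of_notMem (by simpa using not_lt.2 (le_of_lt (by exact hu : u < x)) : x ∉ Set.Iio u)]
      simp
    rw [continuousAt_congr heq]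
    exact continuousAt_const

lemma cont_s {Ω : Type*} [MeasurableSpace Ω] (μ : Measure Ω) [IsProbabilityMeasure μ]
    {d : ℕ} (X : Ω → (Fin d → ℝ)) (hX : Measurable X)
    (hdens : Measure.map X μ ≪ (volume : Measure (Fin d → ℝ)))
    (Z : Ω → ℝ)
    (ξ : (Fin d → ℝ) × ℝ → ℝ) (hξ0 : ∀ y, 0 ≤ ξ y)
    (hξi : Integrable (fun ω => ξ (X ω, Z ω)) μ) (j : Fin d) :
    Continuous (fun t : ℝ =>
      ∫ ω', ξ (X ω', Z ω') * (Set.Iio t).indicator (fun _ => (1:ℝ)) (X ω' j) ∂μ) := by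
  rw [continuous_iff_continuousAt]
  intro t
  apply continuousAt_of_dominated (bound := fun ω' => ξ (X ω', Z ω'))
  · filter_upwards with u
    exact hξi.aestronglyMeasurable.mul
      ((measurable_const.indicator measurableSet_Iio).comp
        ((measurable_pi_apply j).comp hX)).aestronglyMeasurable
  · filter_upwards with u
    filter_upwards with ω'
    have h0 : (0:ℝ) ≤ (Set.Iio u).indicator (fun _ => (1:ℝ)) (X ω' j) :=
      Set.indicator_nonneg (fun _ _ => zero_le_one) _
    have h1 : (Set.Iio u).indicator (fun _ => (1:ℝ)) (X ω' j) ≤ 1 :=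
      Set.indicator_le' (fun _ _ => le_refl _) (fun _ _ => zero_le_one) _
    calc ‖ξ (X ω', Z ω') * (Set.Iio u).indicator (fun _ => (1:ℝ)) (X ω' j)‖
        = ξ (X ω', Z ω') * (Set.Iio u).indicator (fun _ => (1:ℝ)) (X ω' j) := by
          rw [Real.norm_eq_abs, abs_of_nonneg (mul_nonneg (hξ0 _) h0)]
      _ ≤ ξ (X ω', Z ω') * 1 := mul_le_mul_of_nonneg_left h1 (hξ0 _)
      _ = ξ (X ω', Z ω') := mul_one _
  · exact hξi
  · have hnull : ∀ᵐ ω' ∂μ, X ω' j ≠ t := by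
      rw [ae_iff]
      simpa using hyperplane_null μ X hX hdens j t
    filter_upwards [hnull] with ω' hω'
    exact ind_cont _ _ _ hω'

section
variable {Ω : Type*} [MeasurableSpace Ω] {μ : Measure Ω} [IsProbabilityMeasure μ]
  {d : ℕ} {X : Ω → (Fin d → ℝ)} {Z : Ω → ℝ} {ξ : (Fin d → ℝ) × ℝ → ℝ}

lemma boxFn_meas (hξm : Measurable ξ) (a : Fin d → ℝ) : Measurable (boxFn ξ a) :=
  hξm.mul ((measurable_const.indicator (MeasurableSet.univ_pi
    (fun _ => measurableSet_Ico))).comp measurable_fst)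

lemma boxFn_abs_le (hξ0 : ∀ y, 0 ≤ ξ y) (a : Fin d → ℝ) (y : (Fin d → ℝ) × ℝ) :
    ‖boxFn ξ a y‖ ≤ ξ y := by
  have h0 : (0:ℝ) ≤ (Set.univ.pi fun j => Set.Ico (0:ℝ) (a j)).indicator
      (fun _ => (1:ℝ)) y.1 := Set.indicator_nonneg (fun _ _ => zero_le_one) _
  have h1 : (Set.univ.pi fun j => Set.Ico (0:ℝ) (a j)).indicator (fun _ => (1:ℝ)) y.1 ≤ 1 :=
    Set.indicator_le' (fun _ _ => le_refl _) (fun _ _ => zero_le_one) _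
  rw [boxFn, Real.norm_eq_abs, abs_of_nonneg (mul_nonneg (hξ0 _) h0)]
  calc ξ y * _ ≤ ξ y * 1 := mul_le_mul_of_nonneg_left h1 (hξ0 _)
    _ = ξ y := mul_one _

lemma boxFn_integrable (hX : Measurable X) (hξm : Measurable ξ) (hξ0 : ∀ y, 0 ≤ ξ y)
    (hξi : Integrable (fun ω => ξ (X ω, Z ω)) μ) (a : Fin d → ℝ) :
    Integrable (fun ω => boxFn ξ a (X ω, Z ω)) μ := by
  refine hξi.mono ?_ ?_
  · exact hξi.aestronglyMeasurable.mul
      ((measurable_const.indicator (MeasurableSet.univ_pi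
        (fun _ => measurableSet_Ico))).comp hX).aestronglyMeasurable
  · filter_upwards with ω
    calc ‖boxFn ξ a (X ω, Z ω)‖ ≤ ξ (X ω, Z ω) := boxFn_abs_le hξ0 a _
      _ ≤ ‖ξ (X ω, Z ω)‖ := le_abs_self _

lemma boxFn_mono (hξ0 : ∀ y, 0 ≤ ξ y) {a b : Fin d → ℝ} (hab : a ≤ b)
    (y : (Fin d → ℝ) × ℝ) : boxFn ξ a y ≤ boxFn ξ b y := by
  refine mul_le_mul_of_nonneg_left ?_ (hξ0 _)
  refine Set.indicator_le_indicator_of_subset ?_ (fun _ => zero_le_one) _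
  exact Set.pi_mono (fun j _ => Set.Ico_subset_Ico le_rfl (hab j))

end


section
variable {Ω : Type*} [MeasurableSpace Ω] {μ : Measure Ω} [IsProbabilityMeasure μ]
  {d : ℕ} {X : Ω → (Fin d → ℝ)} {Z : Ω → ℝ} {ξ : (Fin d → ℝ) × ℝ → ℝ}

-- slab integrand integrable
lemma slab_integrable (hX : Measurable X) (hξ0 : ∀ y, 0 ≤ ξ y)
    (hξi : Integrable (fun ω => ξ (X ω, Z ω)) μ) (j : Fin d) (t : ℝ) :
    Integrable (fun ω' => ξ (X ω', Z ω') * (Set.Iio t).indicator (fun _ => (1:ℝ)) (X ω' j)) μ := by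
  refine hξi.mono ?_ ?_
  · exact hξi.aestronglyMeasurable.mul
      ((measurable_const.indicator measurableSet_Iio).comp
        ((measurable_pi_apply j).comp hX)).aestronglyMeasurable
  · filter_upwards with ω
    have h0 : (0:ℝ) ≤ (Set.Iio t).indicator (fun _ => (1:ℝ)) (X ω j) :=
      Set.indicator_nonneg (fun _ _ => zero_le_one) _
    have h1 : (Set.Iio t).indicator (fun _ => (1:ℝ)) (X ω j) ≤ 1 :=
      Set.indicator_le' (fun _ _ => le_refl _) (fun _ _ => zero_le_one) _
    rw [Real.norm_eq_abs, abs_of_nonneg (mul_nonneg (hξ0 _) h0)]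
    calc ξ (X ω, Z ω) * _ ≤ ξ (X ω, Z ω) * 1 := mul_le_mul_of_nonneg_left h1 (hξ0 _)
      _ = ξ (X ω, Z ω) := mul_one _
      _ ≤ ‖ξ (X ω, Z ω)‖ := le_abs_self _

end


lemma gc_unif {Ω : Type*} [MeasurableSpace Ω] (μ : Measure Ω) [IsProbabilityMeasure μ]
    {d : ℕ} (X : Ω → (Fin d → ℝ)) (hX : Measurable X)
    (hdens : Measure.map X μ ≪ (volume : Measure (Fin d → ℝ)))
    (Z : Ω → ℝ) (hZae : AEMeasurable Z μ)
    (W : ℕ → Ω → (Fin d → ℝ) × ℝ) (hWmeas : ∀ m, Measurable (W m))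
    (hWindep : iIndepFun W μ)
    (hWident : ∀ m, Measure.map (W m) μ = Measure.map (fun ω => (X ω, Z ω)) μ)
    (ξ : (Fin d → ℝ) × ℝ → ℝ) (hξm : Measurable ξ) (hξ0 : ∀ y, 0 ≤ ξ y)
    (hξi : Integrable (fun ω => ξ (X ω, Z ω)) μ) :
    ∀ᵐ ω ∂μ, ∀ ε > (0:ℝ), ∀ᶠ M : ℕ in atTop, ∀ a ∈ Set.Icc (0 : Fin d → ℝ) 1,
      |(M:ℝ)⁻¹ * ∑ m ∈ Finset.range M, boxFn ξ a (W m ω)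
        - ∫ ω', boxFn ξ a (X ω', Z ω') ∂μ| ≤ ε := by
  -- notation
  set T : (Fin d → ℝ) → ℝ := fun a => ∫ ω', boxFn ξ a (X ω', Z ω') ∂μ with hT
  set s : Fin d → ℝ → ℝ := fun j t =>
    ∫ ω', ξ (X ω', Z ω') * (Set.Iio t).indicator (fun _ => (1:ℝ)) (X ω' j) ∂μ with hs
  have hfi : ∀ a, Integrable (fun ω => boxFn ξ a (X ω, Z ω)) μ :=
    boxFn_integrable hX hξm hξ0 hξi
  have hTmono : ∀ a b : Fin d → ℝ, a ≤ b → T a ≤ T b := fun a b hab =>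
    integral_mono (hfi a) (hfi b) (fun ω => boxFn_mono hξ0 hab _)
  -- slab bound for T
  have hTsub : ∀ a b : Fin d → ℝ, a ≤ b →
      T b - T a ≤ ∑ j : Fin d, (s j (b j) - s j (a j)) := by
    intro a b hab
    rw [hT, ← integral_sub (hfi b) (hfi a)]
    have hrhs : ∑ j : Fin d, (s j (b j) - s j (a j))
        = ∫ ω', ∑ j : Fin d, (ξ (X ω', Z ω') * (Set.Iio (b j)).indicator (fun _ => (1:ℝ)) (X ω' j)
            - ξ (X ω', Z ω') * (Set.Iio (a j)).indicator (fun _ => (1:ℝ)) (X ω' j)) ∂μ := by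
      rw [integral_finset_sum]
      · refine Finset.sum_congr rfl (fun j _ => ?_)
        rw [integral_sub (slab_integrable hX hξ0 hξi j (b j)) (slab_integrable hX hξ0 hξi j (a j))]
      · exact fun j _ => (slab_integrable hX hξ0 hξi j (b j)).sub
          (slab_integrable hX hξ0 hξi j (a j))
    rw [hrhs]
    refine integral_mono ((hfi b).sub (hfi a)) (integrable_finset_sum _ (fun j _ =>
      (slab_integrable hX hξ0 hξi j (b j)).sub (slab_integrable hX hξ0 hξi j (a j)))) ?_
    intro ω'
    have := ind_bracket a b hab (X ω')
    have hxi := hξ0 (X ω', Z ω')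
    simp only [boxFn]
    calc ξ (X ω', Z ω') * _ - ξ (X ω', Z ω') * _
        = ξ (X ω', Z ω') * ((Set.univ.pi fun j => Set.Ico (0:ℝ) (b j)).indicator (fun _ => (1:ℝ)) (X ω')
          - (Set.univ.pi fun j => Set.Ico (0:ℝ) (a j)).indicator (fun _ => (1:ℝ)) (X ω')) := by ring
      _ ≤ ξ (X ω', Z ω') * ∑ j : Fin d, ((Set.Iio (b j)).indicator (fun _ => (1:ℝ)) (X ω' j)
          - (Set.Iio (a j)).indicator (fun _ => (1:ℝ)) (X ω' j)) :=
            mul_le_mul_of_nonneg_left this hxi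
      _ = ∑ j : Fin d, (ξ (X ω', Z ω') * (Set.Iio (b j)).indicator (fun _ => (1:ℝ)) (X ω' j)
          - ξ (X ω', Z ω') * (Set.Iio (a j)).indicator (fun _ => (1:ℝ)) (X ω' j)) := by
            rw [Finset.mul_sum]; exact Finset.sum_congr rfl (fun j _ => by ring)
  -- uniform continuity of slab functions
  have hδex : ∀ ε' > (0:ℝ), ∃ δ > (0:ℝ), ∀ j : Fin d, ∀ t ∈ Set.Icc (0:ℝ) 1,
      ∀ u ∈ Set.Icc (0:ℝ) 1, |t - u| ≤ δ → |s j t - s j u| ≤ ε' := by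
    intro ε' hε'
    have hj : ∀ j : Fin d, ∀ᶠ δ in 𝓝[>] (0:ℝ), ∀ t ∈ Set.Icc (0:ℝ) 1,
        ∀ u ∈ Set.Icc (0:ℝ) 1, |t - u| ≤ δ → |s j t - s j u| ≤ ε' := by
      intro j
      have hc : Continuous (s j) := cont_s μ X hX hdens Z ξ hξ0 hξi j
      have huc : UniformContinuousOn (s j) (Set.Icc 0 1) :=
        isCompact_Icc.uniformContinuousOn_of_continuous hc.continuousOn
      rw [Metric.uniformContinuousOn_iff] at huc
      obtain ⟨δ₀, hδ₀, hδ₀'⟩ := huc ε' hε'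
      filter_upwards [Ioo_mem_nhdsGT_of_mem (Set.left_mem_Ico.2 hδ₀)] with δ hδmem
      intro t ht u hu htu
      have : dist t u < δ₀ := by
        rw [Real.dist_eq]; exact lt_of_le_of_lt htu hδmem.2
      have := hδ₀' t ht u hu this
      rw [Real.dist_eq] at this
      exact le_of_lt this
    obtain ⟨δ, hδ1, hδ2⟩ := ((eventually_all.2 hj).and self_mem_nhdsWithin).exists
    exact ⟨δ, hδ2, hδ1⟩
  -- SLLN on rational grid
  have hgrid : ∀ᵐ ω ∂μ, ∀ q : Fin d → ℚ,
      Tendsto (fun M : ℕ => (M:ℝ)⁻¹ * ∑ m ∈ Finset.range M, boxFn ξ (fun j => (q j : ℝ)) (W m ω))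
        atTop (𝓝 (T (fun j => (q j : ℝ)))) :=
    ae_all_iff.2 (fun q => slln_aux μ X hX Z hZae W hWmeas hWindep hWident _
      (boxFn_meas hξm _) (hfi _))
  filter_upwards [hgrid] with ω hω
  intro ε hε
  set ε2 : ℝ := ε / (2 * (d + 1)) with hε2def
  have hε2 : 0 < ε2 := div_pos hε (by positivity)
  obtain ⟨δ, hδpos, hδ⟩ := hδex ε2 hε2
  obtain ⟨n, hn⟩ := exists_nat_gt (1 / δ)
  have hnpos : 0 < (n:ℝ) := lt_trans (by positivity) hn
  have hn0 : 0 < n := by exact_mod_cast hnpos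
  have hinvn : (1:ℝ) / n ≤ δ := by
    rw [div_le_iff₀ hnpos]
    rw [div_lt_iff₀ hδpos] at hn
    nlinarith
  -- eventually: all grid points are close
  have hev : ∀ᶠ M : ℕ in atTop, ∀ v : Fin d → Fin (n + 1),
      |(M:ℝ)⁻¹ * ∑ m ∈ Finset.range M, boxFn ξ (fun j => (((v j : ℕ) : ℚ) / n : ℚ) : Fin d → ℝ) (W m ω)
        - T (fun j => (((v j : ℕ) : ℚ) / n : ℚ) : Fin d → ℝ)| ≤ ε / 2 := by
    refine eventually_all.2 (fun v => ?_)
    have h := hω (fun j => ((v j : ℕ) : ℚ) / n)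
    have hmem := h.eventually_mem (Metric.closedBall_mem_nhds
      (T (fun j => ((((v j : ℕ) : ℚ) / n : ℚ) : ℝ))) (half_pos hε))
    filter_upwards [hmem] with M hM
    rw [Metric.mem_closedBall, Real.dist_eq] at hM
    exact hM
  filter_upwards [hev] with M hM
  intro a ha
  -- construct brackets
  set k : Fin d → ℕ := fun j => min ⌊(n:ℝ) * a j⌋₊ (n - 1) with hk
  have hkle : ∀ j, k j ≤ n - 1 := fun j => min_le_right _ _
  set qlo : Fin d → ℚ := fun j => (k j : ℚ) / n with hqlo
  set qhi : Fin d → ℚ := fun j => ((k j : ℚ) + 1) / n with hqhi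
  set glo : Fin d → ℝ := fun j => ((qlo j : ℚ) : ℝ) with hglo
  set ghi : Fin d → ℝ := fun j => ((qhi j : ℚ) : ℝ) with hghi
  have hglo_eq : ∀ j, glo j = (k j : ℝ) / n := by
    intro j; rw [hglo, hqlo]; push_cast; ring
  have hghi_eq : ∀ j, ghi j = ((k j : ℝ) + 1) / n := by
    intro j; rw [hghi, hqhi]; push_cast; ring
  have ha0 : ∀ j, (0:ℝ) ≤ a j := fun j => ha.1 j
  have ha1 : ∀ j, a j ≤ 1 := fun j => ha.2 j
  have hlo_le : ∀ j, glo j ≤ a j := by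
    intro j
    rw [hglo_eq, div_le_iff₀ hnpos]
    calc (k j : ℝ) ≤ (⌊(n:ℝ) * a j⌋₊ : ℝ) := by exact_mod_cast min_le_left _ _
      _ ≤ (n:ℝ) * a j := Nat.floor_le (mul_nonneg hnpos.le (ha0 j))
      _ = a j * n := by ring
  have hhi_ge : ∀ j, a j ≤ ghi j := by
    intro j
    rw [hghi_eq, le_div_iff₀ hnpos]
    rcases le_or_gt ⌊(n:ℝ) * a j⌋₊ (n - 1) with h | h
    · have : k j = ⌊(n:ℝ) * a j⌋₊ := min_eq_left h
      rw [this]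
      have := Nat.lt_floor_add_one ((n:ℝ) * a j)
      nlinarith [this]
    · have hkj : k j = n - 1 := min_eq_right (le_of_lt h)
      rw [hkj]
      have hcast : ((n - 1 : ℕ) : ℝ) = (n:ℝ) - 1 := by
        have : (1:ℕ) ≤ n := hn0
        push_cast [this]; ring
      rw [hcast]
      nlinarith [ha1 j]
  have hlo_mem : ∀ j, glo j ∈ Set.Icc (0:ℝ) 1 := by
    intro j
    constructor
    · rw [hglo_eq]; exact div_nonneg (Nat.cast_nonneg _) hnpos.le
    · exact le_trans (le_trans (hlo_le j) (ha1 j)) le_rfl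
  have hhi_mem : ∀ j, ghi j ∈ Set.Icc (0:ℝ) 1 := by
    intro j
    constructor
    · rw [hghi_eq]; exact div_nonneg (by positivity) hnpos.le
    · rw [hghi_eq, div_le_one hnpos]
      have hkj := hkle j
      have : k j + 1 ≤ n := by omega
      exact_mod_cast this
  have hdiff : ∀ j, |ghi j - glo j| ≤ δ := by
    intro j
    rw [hghi_eq, hglo_eq]
    have : ((k j : ℝ) + 1) / n - (k j : ℝ) / n = 1 / n := by field_simp; ring
    rw [this, abs_of_nonneg (by positivity)]
    exact hinvn
  -- grid membership : qlo and qhi are of the grid form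
  have hvlo : ∃ v : Fin d → Fin (n + 1), (fun j => (((v j : ℕ) : ℚ) / n : ℚ)) = qlo := by
    refine ⟨fun j => ⟨k j, by have := hkle j; omega⟩, funext fun j => ?_⟩
    show ((k j : ℚ)) / n = qlo j
    rw [hqlo]
  have hvhi : ∃ v : Fin d → Fin (n + 1), (fun j => (((v j : ℕ) : ℚ) / n : ℚ)) = qhi := by
    refine ⟨fun j => ⟨k j + 1, by have := hkle j; omega⟩, funext fun j => ?_⟩
    show (((k j + 1 : ℕ) : ℚ)) / n = qhi j
    rw [hqhi]; push_cast; ring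
  have hMlo : |(M:ℝ)⁻¹ * ∑ m ∈ Finset.range M, boxFn ξ glo (W m ω) - T glo| ≤ ε / 2 := by
    obtain ⟨v, hv⟩ := hvlo
    have hfun : (fun j => ((((v j : ℕ) : ℚ) / n : ℚ) : ℝ)) = glo := by
      funext j
      exact congrArg (fun q : ℚ => (q:ℝ)) (congrFun hv j)
    have h := hM v
    rwa [hfun] at h
  have hMhi : |(M:ℝ)⁻¹ * ∑ m ∈ Finset.range M, boxFn ξ ghi (W m ω) - T ghi| ≤ ε / 2 := by
    obtain ⟨v, hv⟩ := hvhi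
    have hfun : (fun j => ((((v j : ℕ) : ℚ) / n : ℚ) : ℝ)) = ghi := by
      funext j
      exact congrArg (fun q : ℚ => (q:ℝ)) (congrFun hv j)
    have h := hM v
    rwa [hfun] at h
  -- empirical monotonicity
  have hemp_mono : ∀ (u w : Fin d → ℝ), u ≤ w →
      (M:ℝ)⁻¹ * ∑ m ∈ Finset.range M, boxFn ξ u (W m ω)
        ≤ (M:ℝ)⁻¹ * ∑ m ∈ Finset.range M, boxFn ξ w (W m ω) := by
    intro u w huw
    refine mul_le_mul_of_nonneg_left ?_ (by positivity)
    exact Finset.sum_le_sum (fun m _ => boxFn_mono hξ0 huw _)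
  have hle1 : glo ≤ a := fun j => hlo_le j
  have hle2 : a ≤ ghi := fun j => hhi_ge j
  have hslab : T ghi - T glo ≤ ε / 2 := by
    have h1 := hTsub glo ghi (le_trans hle1 hle2)
    have h2 : ∑ j : Fin d, (s j (ghi j) - s j (glo j)) ≤ ∑ j : Fin d, ε2 := by
      refine Finset.sum_le_sum (fun j _ => ?_)
      have := hδ j (ghi j) (hhi_mem j) (glo j) (hlo_mem j) (hdiff j)
      calc s j (ghi j) - s j (glo j) ≤ |s j (ghi j) - s j (glo j)| := le_abs_self _
        _ ≤ ε2 := this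
    have h3 : ∑ j : Fin d, ε2 = d * ε2 := by
      rw [Finset.sum_const, Finset.card_univ, Fintype.card_fin, nsmul_eq_mul]
    have h4 : (d:ℝ) * ε2 ≤ ε / 2 := by
      rw [hε2def, ← mul_div_assoc, div_le_div_iff₀ (by positivity) (by norm_num)]
      nlinarith [Nat.cast_nonneg (α := ℝ) d, hε.le]
    linarith
  -- conclude
  have hub : (M:ℝ)⁻¹ * ∑ m ∈ Finset.range M, boxFn ξ a (W m ω) - T a
      ≤ ε / 2 + (T ghi - T glo) := by
    have e1 := hemp_mono a ghi hle2
    have e2 := hTmono glo a hle1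
    have e3 := (abs_le.1 hMhi).1
    have e4 := (abs_le.1 hMhi).2
    linarith
  have hlb : T a - (M:ℝ)⁻¹ * ∑ m ∈ Finset.range M, boxFn ξ a (W m ω)
      ≤ ε / 2 + (T ghi - T glo) := by
    have e1 := hemp_mono glo a hle1
    have e2 := hTmono a ghi hle2
    have e3 := (abs_le.1 hMlo).1
    have e4 := (abs_le.1 hMlo).2
    linarith
  rw [abs_le]
  constructor <;> [skip; skip] <;> · simp only [hT] at hub hlb ⊢; linarith


section
variable {Ω : Type*} [MeasurableSpace Ω] {μ : Measure Ω} [IsProbabilityMeasure μ]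
  {d : ℕ} {X : Ω → (Fin d → ℝ)} {Z : Ω → ℝ}

lemma int_zp (hZ : MemLp Z 2 μ) : Integrable (fun ω => xiP (d := d) (X ω, Z ω)) μ := by
  have i1 : Integrable Z μ := hZ.integrable one_le_two
  refine i1.mono (hZ.aestronglyMeasurable.aemeasurable.max aemeasurable_const).aestronglyMeasurable ?_
  filter_upwards with ω
  rw [Real.norm_eq_abs, Real.norm_eq_abs]
  rcases le_total (Z ω) 0 with h | h
  · rw [xiP, max_eq_right h]; simp [abs_nonneg]
  · rw [xiP, max_eq_left h]

lemma int_zm (hZ : MemLp Z 2 μ) : Integrable (fun ω => xiM (d := d) (X ω, Z ω)) μ := by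
  have i1 : Integrable Z μ := hZ.integrable one_le_two
  refine i1.mono (hZ.aestronglyMeasurable.aemeasurable.neg.max aemeasurable_const).aestronglyMeasurable ?_
  filter_upwards with ω
  rw [Real.norm_eq_abs, Real.norm_eq_abs]
  rcases le_total (-Z ω) 0 with h | h
  · rw [xiM, max_eq_right h]; simp [abs_nonneg]
  · rw [xiM, max_eq_left h]; rw [abs_neg]

lemma int_one : Integrable (fun ω => xiOne (d := d) (X ω, Z ω)) μ := by
  simpa [xiOne] using (integrable_const (1:ℝ) (μ := μ))

lemma int_expand (hX : Measurable X) (hZ : MemLp Z 2 μ) (α β : ℝ) (a : Fin d → ℝ) :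
    ∫ ω', treeLoss (X ω') (Z ω') (α, β, a) ∂μ
      = (∫ ω', (Z ω')^2 ∂μ) - 2*β*(∫ ω', Z ω' ∂μ) + β^2
        - 2*(α-β)*((∫ ω', boxFn (xiP (d := d)) a (X ω', Z ω') ∂μ)
            - ∫ ω', boxFn (xiM (d := d)) a (X ω', Z ω') ∂μ)
        + (α^2-β^2)*(∫ ω', boxFn (xiOne (d := d)) a (X ω', Z ω') ∂μ) := by
  have i0 : Integrable (fun ω => (Z ω)^2) μ := hZ.integrable_sq
  have i1 : Integrable Z μ := hZ.integrable one_le_two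
  have ip : Integrable (fun ω => boxFn (xiP (d := d)) a (X ω, Z ω)) μ :=
    boxFn_integrable hX (measurable_snd.max measurable_const) (fun y => le_max_right _ _)
      (int_zp hZ) a
  have im : Integrable (fun ω => boxFn (xiM (d := d)) a (X ω, Z ω)) μ :=
    boxFn_integrable hX (measurable_snd.neg.max measurable_const) (fun y => le_max_right _ _)
      (int_zm hZ) a
  have ione : Integrable (fun ω => boxFn (xiOne (d := d)) a (X ω, Z ω)) μ :=
    boxFn_integrable hX measurable_const (fun y => zero_le_one) (int_one (X := X) (Z := Z)) a
  have ipm : Integrable (fun ω => boxFn (xiP (d := d)) a (X ω, Z ω)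
      - boxFn (xiM (d := d)) a (X ω, Z ω)) μ := ip.sub im
  have hA : Integrable (fun ω => (Z ω)^2 - 2*β*(Z ω)) μ := i0.sub (i1.const_mul _)
  have hB : Integrable (fun ω => (Z ω)^2 - 2*β*(Z ω) + β^2) μ := hA.add (integrable_const _)
  have hC : Integrable (fun ω => (Z ω)^2 - 2*β*(Z ω) + β^2
      - 2*(α-β)*(boxFn (xiP (d := d)) a (X ω, Z ω) - boxFn (xiM (d := d)) a (X ω, Z ω))) μ :=
    hB.sub (ipm.const_mul _)
  rw [show (fun ω' => treeLoss (X ω') (Z ω') (α, β, a))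
      = fun ω' => (Z ω')^2 - 2*β*(Z ω') + β^2
        - 2*(α-β)*(boxFn (xiP (d := d)) a (X ω', Z ω') - boxFn (xiM (d := d)) a (X ω', Z ω'))
        + (α^2-β^2)*(boxFn (xiOne (d := d)) a (X ω', Z ω'))
    from funext fun ω' => treeLoss_expand α β a (X ω', Z ω')]
  rw [integral_add hC (ione.const_mul _), integral_sub hB (ipm.const_mul _),
    integral_add hA (integrable_const _), integral_sub i0 (i1.const_mul _),
    integral_const_mul, integral_const_mul, integral_const_mul, integral_sub ip im,
    integral_const]
  simp [measure_univ]

end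


/-- Let `X` be valued in `[0,1]^d` with a density w.r.t. Lebesgue measure, `Z` square
integrable, and `((X_m, Z_m))` i.i.d. copies of `(X, Z)`.  With
`ν_M(α, β, a) = (1/M) Σ_{m=1}^M (Z_m − α·1{X_m ∈ B_a} − β·1{X_m ∉ B_a})²` and
`ν(α, β, a) = E[(Z − α·1{X ∈ B_a} − β·1{X ∉ B_a})²]`, almost surely, for every `C > 0`,
`sup_{a ∈ [0,1]^d, |α| ≤ C, |β| ≤ C} |ν_M(α, β, a) − ν(α, β, a)| → 0` as `M → ∞`. -/
theorem tendsto_sup_abs_empirical_tree_loss_sub {Ω : Type*} [MeasurableSpace Ω]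
    (μ : Measure Ω) [IsProbabilityMeasure μ]
    {d : ℕ} (X : Ω → (Fin d → ℝ)) (hX : Measurable X)
    (hXval : ∀ ω, X ω ∈ Set.Icc (0 : Fin d → ℝ) 1)
    (hdens : Measure.map X μ ≪ (volume : Measure (Fin d → ℝ)))
    (Z : Ω → ℝ) (hZ : MemLp Z 2 μ)
    (W : ℕ → Ω → (Fin d → ℝ) × ℝ) (hWmeas : ∀ m, Measurable (W m))
    (hWindep : iIndepFun W μ)
    (hWident : ∀ m, Measure.map (W m) μ = Measure.map (fun ω => (X ω, Z ω)) μ) :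
    ∀ᵐ ω ∂μ, ∀ C > (0 : ℝ),
      Tendsto (fun M : ℕ =>
          ⨆ p : {q : ℝ × ℝ × (Fin d → ℝ) //
              |q.1| ≤ C ∧ |q.2.1| ≤ C ∧ q.2.2 ∈ Set.Icc (0 : Fin d → ℝ) 1},
            |(M : ℝ)⁻¹ * (∑ m ∈ Finset.range M, treeLoss (W m ω).1 (W m ω).2 ↑p)
              - ∫ ω', treeLoss (X ω') (Z ω') ↑p ∂μ|)
        atTop (nhds 0) := by
  have hZae : AEMeasurable Z μ := hZ.aestronglyMeasurable.aemeasurable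
  have hf0 := slln_aux μ X hX Z hZae W hWmeas hWindep hWident (fun y => y.2^2)
      (by fun_prop) hZ.integrable_sq
  have hf1 := slln_aux μ X hX Z hZae W hWmeas hWindep hWident (fun y => y.2)
      measurable_snd (hZ.integrable one_le_two)
  have hgp := gc_unif μ X hX hdens Z hZae W hWmeas hWindep hWident (xiP (d := d))
      (measurable_snd.max measurable_const) (fun y => le_max_right _ _) (int_zp hZ)
  have hgm := gc_unif μ X hX hdens Z hZae W hWmeas hWindep hWident (xiM (d := d))
      (measurable_snd.neg.max measurable_const) (fun y => le_max_right _ _) (int_zm hZ)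
  have hg1 := gc_unif μ X hX hdens Z hZae W hWmeas hWindep hWident (xiOne (d := d))
      measurable_const (fun y => zero_le_one) (int_one (X := X) (Z := Z))
  filter_upwards [hf0, hf1, hgp, hgm, hg1] with ω h0 h1 hp hm hone
  intro C hC
  have hne : Nonempty {q : ℝ × ℝ × (Fin d → ℝ) //
      |q.1| ≤ C ∧ |q.2.1| ≤ C ∧ q.2.2 ∈ Set.Icc (0 : Fin d → ℝ) 1} :=
    ⟨⟨(0, 0, 0), by simpa using hC.le, by simpa using hC.le,
      Set.left_mem_Icc.mpr zero_le_one⟩⟩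
  haveI := hne
  rw [NormedAddCommGroup.tendsto_nhds_zero]
  intro ε hε
  set K : ℝ := 1 + 2*C + 8*C + 2*C^2 with hK
  have hKpos : 0 < K := by nlinarith [sq_nonneg C]
  set ε' : ℝ := (ε/2)/K with hε'def
  have hε'pos : 0 < ε' := div_pos (half_pos hε) hKpos
  have e0 : ∀ᶠ M : ℕ in atTop,
      |(M:ℝ)⁻¹ * ∑ m ∈ Finset.range M, (W m ω).2^2 - ∫ ω', (Z ω')^2 ∂μ| ≤ ε' := by
    filter_upwards [h0.eventually_mem (Metric.closedBall_mem_nhds _ hε'pos)] with M hM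
    rw [Metric.mem_closedBall, Real.dist_eq] at hM
    exact hM
  have e1 : ∀ᶠ M : ℕ in atTop,
      |(M:ℝ)⁻¹ * ∑ m ∈ Finset.range M, (W m ω).2 - ∫ ω', Z ω' ∂μ| ≤ ε' := by
    filter_upwards [h1.eventually_mem (Metric.closedBall_mem_nhds _ hε'pos)] with M hM
    rw [Metric.mem_closedBall, Real.dist_eq] at hM
    exact hM
  filter_upwards [e0, e1, hp ε' hε'pos, hm ε' hε'pos, hone ε' hε'pos,
    eventually_ge_atTop 1] with M hb0 hb1 hbp hbm hb3 hM1
  have key : ∀ (α β : ℝ) (a : Fin d → ℝ), |α| ≤ C → |β| ≤ C →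
      a ∈ Set.Icc (0 : Fin d → ℝ) 1 →
      |(M : ℝ)⁻¹ * (∑ m ∈ Finset.range M, treeLoss (W m ω).1 (W m ω).2 (α, β, a))
        - ∫ ω', treeLoss (X ω') (Z ω') (α, β, a) ∂μ| ≤ ε/2 := by
    intro α β a hα hβ ha
    have hid : (M : ℝ)⁻¹ * (∑ m ∈ Finset.range M, treeLoss (W m ω).1 (W m ω).2 (α, β, a))
        - ∫ ω', treeLoss (X ω') (Z ω') (α, β, a) ∂μ
      = ((M:ℝ)⁻¹ * ∑ m ∈ Finset.range M, (W m ω).2^2 - ∫ ω', (Z ω')^2 ∂μ)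
        - 2*β*((M:ℝ)⁻¹ * ∑ m ∈ Finset.range M, (W m ω).2 - ∫ ω', Z ω' ∂μ)
        - 2*(α-β)*(((M:ℝ)⁻¹ * ∑ m ∈ Finset.range M, boxFn (xiP (d := d)) a (W m ω)
              - ∫ ω', boxFn (xiP (d := d)) a (X ω', Z ω') ∂μ)
            - ((M:ℝ)⁻¹ * ∑ m ∈ Finset.range M, boxFn (xiM (d := d)) a (W m ω)
              - ∫ ω', boxFn (xiM (d := d)) a (X ω', Z ω') ∂μ))
        + (α^2-β^2)*((M:ℝ)⁻¹ * ∑ m ∈ Finset.range M, boxFn (xiOne (d := d)) a (W m ω)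
              - ∫ ω', boxFn (xiOne (d := d)) a (X ω', Z ω') ∂μ) := by
      rw [emp_expand α β a M hM1 (fun m => W m ω), int_expand hX hZ α β a]
      ring
    rw [hid]
    set t0 := (M:ℝ)⁻¹ * ∑ m ∈ Finset.range M, (W m ω).2^2 - ∫ ω', (Z ω')^2 ∂μ with ht0
    set t1 := (M:ℝ)⁻¹ * ∑ m ∈ Finset.range M, (W m ω).2 - ∫ ω', Z ω' ∂μ with ht1
    set tp := (M:ℝ)⁻¹ * ∑ m ∈ Finset.range M, boxFn (xiP (d := d)) a (W m ω)
      - ∫ ω', boxFn (xiP (d := d)) a (X ω', Z ω') ∂μ with htp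
    set tm := (M:ℝ)⁻¹ * ∑ m ∈ Finset.range M, boxFn (xiM (d := d)) a (W m ω)
      - ∫ ω', boxFn (xiM (d := d)) a (X ω', Z ω') ∂μ with htm
    set t3 := (M:ℝ)⁻¹ * ∑ m ∈ Finset.range M, boxFn (xiOne (d := d)) a (W m ω)
      - ∫ ω', boxFn (xiOne (d := d)) a (X ω', Z ω') ∂μ with ht3
    have hB0 : |t0| ≤ ε' := hb0
    have hB1 : |t1| ≤ ε' := hb1
    have hBp : |tp| ≤ ε' := hbp a ha
    have hBm : |tm| ≤ ε' := hbm a ha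
    have hB3 : |t3| ≤ ε' := hb3 a ha
    have h2 : |2*β*t1| ≤ 2*C*ε' := by
      rw [abs_mul]
      refine mul_le_mul ?_ hB1 (abs_nonneg _) (by positivity)
      rw [abs_mul, abs_two]
      exact mul_le_mul_of_nonneg_left hβ (by norm_num)
    have h3 : |2*(α-β)*(tp - tm)| ≤ (2*(2*C))*(ε' + ε') := by
      rw [abs_mul]
      refine mul_le_mul ?_ ?_ (abs_nonneg _) (by positivity)
      · rw [abs_mul, abs_two]
        refine mul_le_mul_of_nonneg_left ?_ (by norm_num)
        calc |α - β| ≤ |α| + |β| := abs_sub _ _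
          _ ≤ 2*C := by linarith
      · calc |tp - tm| ≤ |tp| + |tm| := abs_sub _ _
          _ ≤ ε' + ε' := add_le_add hBp hBm
    have h4 : |(α^2-β^2)*t3| ≤ (2*C^2)*ε' := by
      rw [abs_mul]
      refine mul_le_mul ?_ hB3 (abs_nonneg _) (by positivity)
      calc |α^2 - β^2| ≤ |α^2| + |β^2| := abs_sub _ _
        _ = |α|^2 + |β|^2 := by rw [abs_pow, abs_pow]
        _ ≤ C^2 + C^2 := add_le_add (pow_le_pow_left₀ (abs_nonneg _) hα 2)
            (pow_le_pow_left₀ (abs_nonneg _) hβ 2)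
        _ = 2*C^2 := by ring
    have htri : |t0 - 2*β*t1 - 2*(α-β)*(tp - tm) + (α^2-β^2)*t3|
        ≤ |t0| + |2*β*t1| + |2*(α-β)*(tp - tm)| + |(α^2-β^2)*t3| := by
      calc |t0 - 2*β*t1 - 2*(α-β)*(tp - tm) + (α^2-β^2)*t3|
          ≤ |t0 - 2*β*t1 - 2*(α-β)*(tp - tm)| + |(α^2-β^2)*t3| := abs_add_le _ _
        _ ≤ |t0 - 2*β*t1| + |2*(α-β)*(tp - tm)| + |(α^2-β^2)*t3| :=
            add_le_add_left (abs_sub _ _) _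
        _ ≤ |t0| + |2*β*t1| + |2*(α-β)*(tp - tm)| + |(α^2-β^2)*t3| := by
            have := abs_sub t0 (2*β*t1)
            linarith
    have hsum : |t0| + |2*β*t1| + |2*(α-β)*(tp - tm)| + |(α^2-β^2)*t3| ≤ ε' * K := by
      rw [hK]
      nlinarith [hB0, h2, h3, h4]
    have hfin : ε' * K = ε/2 := by
      rw [hε'def]
      field_simp
    calc |t0 - 2*β*t1 - 2*(α-β)*(tp - tm) + (α^2-β^2)*t3|
        ≤ ε' * K := le_trans htri hsum
      _ = ε/2 := hfin
  have keyp : ∀ p : {q : ℝ × ℝ × (Fin d → ℝ) //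
      |q.1| ≤ C ∧ |q.2.1| ≤ C ∧ q.2.2 ∈ Set.Icc (0 : Fin d → ℝ) 1},
      |(M : ℝ)⁻¹ * (∑ m ∈ Finset.range M, treeLoss (W m ω).1 (W m ω).2 ↑p)
        - ∫ ω', treeLoss (X ω') (Z ω') ↑p ∂μ| ≤ ε/2 := by
    rintro ⟨⟨α, β, a⟩, hα, hβ, ha⟩
    exact key α β a hα hβ ha
  have hbdd : BddAbove (Set.range fun p : {q : ℝ × ℝ × (Fin d → ℝ) //
      |q.1| ≤ C ∧ |q.2.1| ≤ C ∧ q.2.2 ∈ Set.Icc (0 : Fin d → ℝ) 1} =>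
      |(M : ℝ)⁻¹ * (∑ m ∈ Finset.range M, treeLoss (W m ω).1 (W m ω).2 ↑p)
        - ∫ ω', treeLoss (X ω') (Z ω') ↑p ∂μ|) := by
    refine ⟨ε/2, ?_⟩
    rintro x ⟨p, rfl⟩
    exact keyp p
  have hle := ciSup_le keyp
  have hge : 0 ≤ ⨆ p : {q : ℝ × ℝ × (Fin d → ℝ) //
      |q.1| ≤ C ∧ |q.2.1| ≤ C ∧ q.2.2 ∈ Set.Icc (0 : Fin d → ℝ) 1},
      |(M : ℝ)⁻¹ * (∑ m ∈ Finset.range M, treeLoss (W m ω).1 (W m ω).2 ↑p)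
        - ∫ ω', treeLoss (X ω') (Z ω') ↑p ∂μ| :=
    le_ciSup_of_le hbdd hne.some (abs_nonneg _)
  rw [Real.norm_eq_abs, abs_of_nonneg hge]
  exact lt_of_le_of_lt hle (half_lt_self hε)
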